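/- Let f : [a,b] → 𝔽 and define h : [a,b] → 𝔽 by h(t) = f(t)·Δg(t). Let D₁ = {t ∈ [a,b] ∩ N_g⁻ : t is an accumulation point of D_g ∩ [a,t)}, D₂ = {t ∈ [a,b] ∩ N_g⁺ : t is an accumulation point of D_g ∩ (t,b]}, D₃ = {t ∈ [a,b] \ (N_g ∪ D_g) : t is an accumulation point of D_g ∩ [a,b]}. For t ∈ [a,b]: (1) if t* ∈ D₁ ∪ D₂ ∪ D₃, then h is g-differentiable at t if and only if lim_{s→t*, s∈D_g} f(s)Δg(s)/(g(s) − g(t)) = 0 (the limit being the appropriate one-sided limit matching the definition of the Stieltjes derivative at t*); (2) if t* ∈ D_g and t* is an accumulation point of D_g ∩ (t,b], then h is g-differentiable at t if and only if lim_{s→t*⁺, s∈D_g} f(s)Δg(s) = 0; (3) in any other case, h is g-differentiable at t. Moreover, whenever h is g-differentiable at t, h'_g(t) = −f(t*)·χ_{D_g}(t*), where χ_{D_g} is the indicator function of D_g. -/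

import Mathlib

open Set Filter Topology
open scoped Classical

noncomputable section

/-- The right-hand limit `g(t⁺)` of a nondecreasing function `g`. -/
def rLim (g : ℝ → ℝ) (t : ℝ) : ℝ := sInf (g '' Set.Ioi t)

/-- `Δg(t) = g(t⁺) − g(t)`. -/
def jump (g : ℝ → ℝ) (t : ℝ) : ℝ := rLim g t - g t

/-- `C_g`: the set of points near which `g` is constant. -/
def Cset (g : ℝ → ℝ) : Set ℝ :=
  {t | ∃ ε > 0, ∀ u ∈ Set.Ioo (t - ε) (t + ε), g u = g t}

/-- `D_g`: the set of discontinuity points of `g`. -/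
def Dset (g : ℝ → ℝ) : Set ℝ := {t | 0 < jump g t}

/-- The right endpoints `b_n` of the connected components of the open set `C_g`. -/
def rightEndpoints (g : ℝ → ℝ) : Set ℝ :=
  {x | x ∉ Cset g ∧ ∃ s, s < x ∧ Set.Ioo s x ⊆ Cset g}

/-- The left endpoints `a_n` of the connected components of the open set `C_g`. -/
def leftEndpoints (g : ℝ → ℝ) : Set ℝ :=
  {x | x ∉ Cset g ∧ ∃ s, x < s ∧ Set.Ioo x s ⊆ Cset g}

/-- `N_g⁻ = {a_n : n ∈ Λ} \ D_g`. -/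
def Nminus (g : ℝ → ℝ) : Set ℝ := leftEndpoints g \ Dset g

/-- `N_g⁺ = {b_n : n ∈ Λ} \ D_g`. -/
def Nplus (g : ℝ → ℝ) : Set ℝ := rightEndpoints g \ Dset g

/-- `N_g = N_g⁻ ∪ N_g⁺`. -/
def Nset (g : ℝ → ℝ) : Set ℝ := Nminus g ∪ Nplus g

/-- `t* = t` if `t ∉ C_g`, and `t* = b_n` (the right endpoint of the connected component
`(a_n, b_n)` of `C_g` containing `t`) if `t ∈ C_g`. -/
def tstar (g : ℝ → ℝ) (t : ℝ) : ℝ :=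
  if t ∈ Cset g then sSup (connectedComponentIn (Cset g) t) else t

/-- The filter along which the Stieltjes difference quotient is taken at a point of `[a,b]`:
from the right at points of `D_g ∪ N_g⁺ ∪ {a}`, from the left at points of `N_g⁻ ∪ {b}`,
two-sided otherwise. -/
def sFilter (g : ℝ → ℝ) (a b t : ℝ) : Filter ℝ :=
  if t ∈ Dset g ∨ t ∈ Nplus g ∨ t = a then 𝓝[Set.Ioi t ∩ Set.Icc a b] t
  else if t ∈ Nminus g ∨ t = b then 𝓝[Set.Iio t ∩ Set.Icc a b] t
  else 𝓝[Set.Icc a b \ {t}] t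

/-- `f` has Stieltjes derivative (`g`-derivative) `L` at `t`, relative to `[a,b]`. -/
def HasSDerivAt {K : Type*} [RCLike K] (g : ℝ → ℝ) (a b : ℝ) (f : ℝ → K) (t : ℝ) (L : K) :
    Prop :=
  Filter.Tendsto (fun s => (g s - g (tstar g t))⁻¹ • (f s - f (tstar g t)))
    (sFilter g a b (tstar g t)) (𝓝 L)

/-- `f` is `g`-differentiable at `t`, relative to `[a,b]`. -/
def SDiffAt {K : Type*} [RCLike K] (g : ℝ → ℝ) (a b : ℝ) (f : ℝ → K) (t : ℝ) : Prop :=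
  ∃ L, HasSDerivAt g a b f t L

/-- `f` is `g`-continuous at `t` relative to the domain `D`. -/
def GContAt {K : Type*} [RCLike K] (g : ℝ → ℝ) (f : ℝ → K) (D : Set ℝ) (t : ℝ) : Prop :=
  ∀ ε > 0, ∃ δ > 0, ∀ s ∈ D, |g t - g s| < δ → ‖f t - f s‖ < ε

/-- `D₁`: points of `[a,b] ∩ N_g⁻` accumulating `D_g ∩ [a,t)`. -/
def D1 (g : ℝ → ℝ) (a b : ℝ) : Set ℝ :=
  {x | x ∈ Set.Icc a b ∩ Nminus g ∧ AccPt x (𝓟 (Dset g ∩ Set.Ico a x))}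

/-- `D₂`: points of `[a,b] ∩ N_g⁺` accumulating `D_g ∩ (t,b]`. -/
def D2 (g : ℝ → ℝ) (a b : ℝ) : Set ℝ :=
  {x | x ∈ Set.Icc a b ∩ Nplus g ∧ AccPt x (𝓟 (Dset g ∩ Set.Ioc x b))}

/-- `D₃`: points of `[a,b] \ (N_g ∪ D_g)` accumulating `D_g ∩ [a,b]`. -/
def D3 (g : ℝ → ℝ) (a b : ℝ) : Set ℝ :=
  {x | x ∈ Set.Icc a b \ (Nset g ∪ Dset g) ∧ AccPt x (𝓟 (Dset g ∩ Set.Icc a b))}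

/-- `D̃₁`: points of `[a,b] ∩ N_g⁻` not accumulating `D_g ∩ [a,t)`. -/
def Dt1 (g : ℝ → ℝ) (a b : ℝ) : Set ℝ :=
  {x | x ∈ Set.Icc a b ∩ Nminus g ∧ ¬ AccPt x (𝓟 (Dset g ∩ Set.Ico a x))}

/-- `D̃₂`: points of `[a,b] ∩ (N_g⁺ ∪ D_g)` not accumulating `D_g ∩ (t,b]`. -/
def Dt2 (g : ℝ → ℝ) (a b : ℝ) : Set ℝ :=
  {x | x ∈ Set.Icc a b ∩ (Nplus g ∪ Dset g) ∧ ¬ AccPt x (𝓟 (Dset g ∩ Set.Ioc x b))}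

/-- `D̃₃`: points of `[a,b] \ (C_g ∪ N_g ∪ D_g)` not accumulating `D_g ∩ [a,b]`. -/
def Dt3 (g : ℝ → ℝ) (a b : ℝ) : Set ℝ :=
  {x | x ∈ Set.Icc a b \ (Cset g ∪ Nset g ∪ Dset g) ∧ ¬ AccPt x (𝓟 (Dset g ∩ Set.Icc a b))}

/-- `C₁`: points of `[a,b] ∩ N_g⁻` accumulating `C_g ∩ [a,t)`. -/
def C1 (g : ℝ → ℝ) (a b : ℝ) : Set ℝ :=
  {x | x ∈ Set.Icc a b ∩ Nminus g ∧ AccPt x (𝓟 (Cset g ∩ Set.Ico a x))}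

/-- `C₂`: points of `[a,b] ∩ (N_g⁺ ∪ D_g)` accumulating `C_g ∩ (t,b]`. -/
def C2 (g : ℝ → ℝ) (a b : ℝ) : Set ℝ :=
  {x | x ∈ Set.Icc a b ∩ (Nplus g ∪ Dset g) ∧ AccPt x (𝓟 (Cset g ∩ Set.Ioc x b))}

/-- `C₃`: points of `[a,b] \ (C_g ∪ N_g ∪ D_g)` accumulating `C_g ∩ [a,b]`. -/
def C3 (g : ℝ → ℝ) (a b : ℝ) : Set ℝ :=
  {x | x ∈ Set.Icc a b \ (Cset g ∪ Nset g ∪ Dset g) ∧ AccPt x (𝓟 (Cset g ∩ Set.Icc a b))}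

/-- `A_g = {t : sup{s ∈ [a,b] : g(s) = g(t)} ∈ D_g}`. -/
def Ag (g : ℝ → ℝ) (a b : ℝ) : Set ℝ :=
  {t | sSup {s | s ∈ Set.Icc a b ∧ g s = g t} ∈ Dset g}

/-- `H_g`: points lying in some `(s₁, s₂]` with `s₁, s₂ ∈ D_g` and `(s₁, s₂) ⊆ C_g`. -/
def Hg (g : ℝ → ℝ) : Set ℝ :=
  {t | ∃ s₁ ∈ Dset g, ∃ s₂ ∈ Dset g, t ∈ Set.Ioc s₁ s₂ ∧ Set.Ioo s₁ s₂ ⊆ Cset g}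

/-- Membership in `BC_g([a,b], K)`: bounded and `g`-continuous on `[a,b]`. -/
def MemBCg {K : Type*} [RCLike K] (g : ℝ → ℝ) (a b : ℝ) (f : ℝ → K) : Prop :=
  (∃ M, ∀ s ∈ Set.Icc a b, ‖f s‖ ≤ M) ∧ ∀ s ∈ Set.Icc a b, GContAt g f (Set.Icc a b) s

/-- Membership in `BC¹_g([a,b], K)`. -/
def MemBC1g {K : Type*} [RCLike K] (g : ℝ → ℝ) (a b : ℝ) (f : ℝ → K) : Prop :=
  MemBCg g a b f ∧
    ∃ f' : ℝ → K, (∀ s ∈ Set.Icc a b, HasSDerivAt g a b f s (f' s)) ∧ MemBCg g a b f'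


section AuxLemmas
variable {g : ℝ → ℝ}

lemma rLim_le (hg : Monotone g) {x s : ℝ} (hs : x < s) : rLim g x ≤ g s :=
  csInf_le ⟨g x, by rintro _ ⟨u, hu, rfl⟩; exact hg (le_of_lt hu)⟩ ⟨s, hs, rfl⟩

lemma le_rLim (hg : Monotone g) (x : ℝ) : g x ≤ rLim g x :=
  le_csInf ⟨g (x+1), x+1, by simp, rfl⟩ (by rintro _ ⟨u, hu, rfl⟩; exact hg hu.le)

lemma jump_nonneg (hg : Monotone g) (x : ℝ) : 0 ≤ jump g x := sub_nonneg.2 (le_rLim hg x)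

lemma jump_eq_zero (hg : Monotone g) {x : ℝ} (hx : x ∉ Dset g) : jump g x = 0 :=
  le_antisymm (not_lt.1 hx) (jump_nonneg hg x)

lemma tendsto_rLim (hg : Monotone g) (x : ℝ) : Tendsto g (𝓝[>] x) (𝓝 (rLim g x)) :=
  hg.tendsto_nhdsGT x

lemma countable_Dset (hg : Monotone g) : (Dset g).Countable := by
  refine (hg.countable_not_continuousAt).mono ?_
  intro x hx hc
  have h1 : Tendsto g (𝓝[>] x) (𝓝 (g x)) := hc.continuousWithinAt
  have : rLim g x = g x := tendsto_nhds_unique (tendsto_rLim hg x) h1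
  simp only [Dset, mem_setOf_eq, jump, this, sub_self, lt_self_iff_false] at hx

lemma Cset_nbhd {x : ℝ} (hx : x ∈ Cset g) :
    ∃ ε > 0, (∀ u ∈ Set.Ioo (x-ε) (x+ε), u ∈ Cset g) ∧
      ∀ u ∈ Set.Ioo (x-ε) (x+ε), g u = g x := by
  obtain ⟨ε, hε, hconst⟩ := hx
  refine ⟨ε, hε, fun u hu => ?_, hconst⟩
  refine ⟨min (u - (x-ε)) ((x+ε) - u), by
    simp only [lt_min_iff, sub_pos]; exact ⟨hu.1, hu.2⟩, fun v hv => ?_⟩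
  have h1 := hv.1
  have h2 := hv.2
  have hm1 : min (u - (x-ε)) ((x+ε) - u) ≤ u - (x-ε) := min_le_left _ _
  have hm2 : min (u - (x-ε)) ((x+ε) - u) ≤ (x+ε) - u := min_le_right _ _
  have hvI : v ∈ Set.Ioo (x-ε) (x+ε) := ⟨by linarith, by linarith⟩
  rw [hconst v hvI, hconst u hu]

lemma isOpen_Cset_pred (P : ℝ → Prop) : IsOpen {y | y ∈ Cset g ∧ P (g y)} := by
  rw [Metric.isOpen_iff]
  rintro y ⟨hyC, hyP⟩
  obtain ⟨ε, hε, hC, hconst⟩ := Cset_nbhd hyC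
  refine ⟨ε, hε, fun u hu => ?_⟩
  rw [Real.ball_eq_Ioo] at hu
  exact ⟨hC u hu, by rw [hconst u hu]; exact hyP⟩

lemma isOpen_Cset : IsOpen (Cset g) := by
  have := isOpen_Cset_pred (g := g) (fun _ => True)
  simpa using this

lemma constant_on_comp {x y : ℝ} (hx : x ∈ Cset g)
    (hy : y ∈ connectedComponentIn (Cset g) x) : g y = g x := by
  by_contra hne
  have hpc : IsPreconnected (connectedComponentIn (Cset g) x) :=
    (isConnected_connectedComponentIn_iff.2 hx).isPreconnected
  have hsub : connectedComponentIn (Cset g) x ⊆ Cset g := connectedComponentIn_subset _ _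
  obtain ⟨z, hz1, hz2, hz3⟩ := hpc {y | y ∈ Cset g ∧ g y = g x} {y | y ∈ Cset g ∧ g y ≠ g x}
    (isOpen_Cset_pred (fun v => v = g x)) (isOpen_Cset_pred (fun v => v ≠ g x))
    (fun u hu => by
      by_cases h : g u = g x
      · exact Or.inl ⟨hsub hu, h⟩
      · exact Or.inr ⟨hsub hu, h⟩)
    ⟨x, mem_connectedComponentIn hx, hx, rfl⟩
    ⟨y, hy, hsub hy, hne⟩
  exact hz3.2 hz2.2

lemma tstar_spec (hg : Monotone g) (hlc : ∀ x : ℝ, ContinuousWithinAt g (Set.Iio x) x)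
    {b t : ℝ} (htb : t ≤ b) (hbC : b ∉ Cset g) :
    t ≤ tstar g t ∧ tstar g t ≤ b ∧ g (tstar g t) = g t ∧ tstar g t ∉ Cset g ∧
      (t ∈ Cset g → tstar g t ∈ rightEndpoints g) := by
  by_cases hC : t ∈ Cset g
  · have hts : tstar g t = sSup (connectedComponentIn (Cset g) t) := if_pos hC
    set comp := connectedComponentIn (Cset g) t with hcomp
    have hopen : IsOpen comp := isOpen_Cset.connectedComponentIn
    have hpc : IsPreconnected comp := (isConnected_connectedComponentIn_iff.2 hC).isPreconnected
    have hoc : comp.OrdConnected := hpc.ordConnected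
    have htc : t ∈ comp := mem_connectedComponentIn hC
    have hsub : comp ⊆ Cset g := connectedComponentIn_subset _ _
    have hne : comp.Nonempty := ⟨t, htc⟩
    have hbdd : BddAbove comp := by
      refine ⟨b, fun y hy => ?_⟩
      by_contra hyb
      exact hbC (hsub (hoc.out htc hy ⟨htb, (not_le.1 hyb).le⟩))
    set m := sSup comp with hm
    have hlt : t < m := by
      obtain ⟨ε, hε, hball⟩ := Metric.isOpen_iff.1 hopen t htc
      have : t + ε/2 ∈ comp := hball (by
        rw [Real.ball_eq_Ioo]; constructor <;> [skip; skip] <;> linarith)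
      have := le_csSup hbdd this
      linarith
    have hmb : m ≤ b := csSup_le hne fun y hy => by
      by_contra hyb
      exact hbC (hsub (hoc.out htc hy ⟨htb, (not_le.1 hyb).le⟩))
    have hIoo : Set.Ioo t m ⊆ comp := by
      intro u hu
      obtain ⟨v, hv, huv⟩ := exists_lt_of_lt_csSup hne hu.2
      exact hoc.out htc hv ⟨hu.1.le, huv.le⟩
    have hgm : g m = g t := by
      have h1 : Tendsto g (𝓝[Set.Ioo t m] m) (𝓝 (g m)) :=
        (hlc m).tendsto.mono_left (nhdsWithin_mono _ Set.Ioo_subset_Iio_self)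
      haveI : (𝓝[Set.Ioo t m] m).NeBot := by
        rw [← mem_closure_iff_nhdsWithin_neBot, closure_Ioo hlt.ne]
        exact ⟨hlt.le, le_refl m⟩
      have h2 : Tendsto g (𝓝[Set.Ioo t m] m) (𝓝 (g t)) := by
        refine Tendsto.congr' ?_ tendsto_const_nhds
        filter_upwards [self_mem_nhdsWithin] with s hs
        exact (constant_on_comp hC (hIoo hs)).symm
      exact tendsto_nhds_unique h1 h2
    have hmC : m ∉ Cset g := by
      intro hmc
      obtain ⟨ε, hε, hCn, _⟩ := Cset_nbhd hmc
      have hw : max t (m - ε) < m := by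
        rw [max_lt_iff]; exact ⟨hlt, by linarith⟩
      set p := (max t (m - ε) + m) / 2 with hp
      have hp1 : p ∈ Set.Ioo t m := by
        constructor
        · have := le_max_left t (m - ε); simp only [hp]; linarith
        · simp only [hp]; linarith
      have hp2 : p ∈ Set.Ioo (m - ε) (m + ε) := by
        have := le_max_right t (m - ε)
        constructor
        · simp only [hp]; linarith
        · simp only [hp]; linarith
      have hU : IsPreconnected (comp ∪ Set.Ioo (m - ε) (m + ε)) :=
        IsPreconnected.union p (hIoo hp1) hp2 hpc isPreconnected_Ioo
      have hsub2 : comp ∪ Set.Ioo (m - ε) (m + ε) ⊆ Cset g := by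
        rintro u (hu | hu)
        · exact hsub hu
        · exact hCn u hu
      have hcc := hU.subset_connectedComponentIn (Or.inl htc) hsub2
      have hmem : m + ε/2 ∈ comp := hcc (Or.inr ⟨by linarith, by linarith⟩)
      have := le_csSup hbdd hmem
      linarith
    rw [hts]
    exact ⟨hlt.le, hmb, hgm, hmC, fun _ => ⟨hmC, t, hlt, fun u hu => hsub (hIoo hu)⟩⟩
  · have hts : tstar g t = t := if_neg hC
    rw [hts]
    exact ⟨le_refl t, htb, rfl, hC, fun h => absurd h hC⟩

lemma neBot_sdiff_right {x y : ℝ} (hxy : x < y) {E : Set ℝ} (hE : E.Countable) :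
    (𝓝[Set.Ioo x y \ E] x).NeBot := by
  rw [← mem_closure_iff_nhdsWithin_neBot, mem_closure_iff]
  intro U hU hxU
  have h1 : (U ∩ Set.Ioo x y).Nonempty := by
    have hx : x ∈ closure (Set.Ioo x y) := by
      rw [closure_Ioo hxy.ne]; exact ⟨le_refl x, hxy.le⟩
    exact mem_closure_iff.1 hx U hU hxU
  obtain ⟨z, ⟨hzU, hzI⟩, hzE⟩ :=
    (hE.dense_compl ℝ).inter_open_nonempty (U ∩ Set.Ioo x y) (hU.inter isOpen_Ioo) h1
  exact ⟨z, hzU, hzI, hzE⟩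

lemma neBot_sdiff_left {x y : ℝ} (hxy : x < y) {E : Set ℝ} (hE : E.Countable) :
    (𝓝[Set.Ioo x y \ E] y).NeBot := by
  rw [← mem_closure_iff_nhdsWithin_neBot, mem_closure_iff]
  intro U hU hxU
  have h1 : (U ∩ Set.Ioo x y).Nonempty := by
    have hx : y ∈ closure (Set.Ioo x y) := by
      rw [closure_Ioo hxy.ne]; exact ⟨hxy.le, le_refl y⟩
    exact mem_closure_iff.1 hx U hU hxU
  obtain ⟨z, ⟨hzU, hzI⟩, hzE⟩ :=
    (hE.dense_compl ℝ).inter_open_nonempty (U ∩ Set.Ioo x y) (hU.inter isOpen_Ioo) h1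
  exact ⟨z, hzU, hzI, hzE⟩

lemma not_accPt_eventually {x : ℝ} {S : Set ℝ} (h : ¬ AccPt x (𝓟 S)) :
    ∀ᶠ s in 𝓝[≠] x, s ∉ S := by
  rw [AccPt, not_neBot, inf_principal_eq_bot] at h
  exact h

lemma sup_decomp {α : Type*} (F : Filter α) (s : Set α) : F ⊓ 𝓟 s ⊔ F ⊓ 𝓟 sᶜ = F := by
  rw [← inf_sup_left, sup_principal, Set.union_compl_self, principal_univ, inf_top_eq]

end AuxLemmas

/-- `g`-differentiability of `h = f·Δg`, with the value of the derivative. -/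
theorem stmt6 {K : Type*} [RCLike K] (g : ℝ → ℝ) (hg : Monotone g)
    (hlc : ∀ x : ℝ, ContinuousWithinAt g (Set.Iio x) x)
    (a b : ℝ) (hab : a < b) (ha : a ∉ Nminus g)
    (hb : b ∉ Dset g ∪ Cset g ∪ Nplus g)
    (f : ℝ → K) (t : ℝ) (ht : t ∈ Set.Icc a b) :
    (tstar g t ∈ D1 g a b ∪ D2 g a b ∪ D3 g a b →
      (SDiffAt g a b (fun s => jump g s • f s) t ↔
        Filter.Tendsto (fun s => (g s - g t)⁻¹ • (jump g s • f s))
          (sFilter g a b (tstar g t) ⊓ 𝓟 (Dset g)) (𝓝 (0 : K)))) ∧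
    (tstar g t ∈ Dset g → AccPt (tstar g t) (𝓟 (Dset g ∩ Set.Ioc t b)) →
      (SDiffAt g a b (fun s => jump g s • f s) t ↔
        Filter.Tendsto (fun s => jump g s • f s)
          (sFilter g a b (tstar g t) ⊓ 𝓟 (Dset g)) (𝓝 (0 : K)))) ∧
    (tstar g t ∉ D1 g a b ∪ D2 g a b ∪ D3 g a b →
      ¬ (tstar g t ∈ Dset g ∧ AccPt (tstar g t) (𝓟 (Dset g ∩ Set.Ioc t b))) →
      SDiffAt g a b (fun s => jump g s • f s) t) ∧
    (∀ L : K, HasSDerivAt g a b (fun s => jump g s • f s) t L →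
      L = -(Set.indicator (Dset g) (fun _ => (1 : ℝ)) (tstar g t)) • f (tstar g t))  := by
  classical
  have hbD : b ∉ Dset g := fun h => hb (Or.inl (Or.inl h))
  have hbC : b ∉ Cset g := fun h => hb (Or.inl (Or.inr h))
  have hbN : b ∉ Nplus g := fun h => hb (Or.inr h)
  obtain ⟨htx, hxb, hgx, hxC, hxE⟩ := tstar_spec hg hlc ht.2 hbC
  simp only [SDiffAt, HasSDerivAt]
  set x := tstar g t with hxdef
  have hax : a ≤ x := le_trans ht.1 htx
  have hxIcc : x ∈ Set.Icc a b := ⟨hax, hxb⟩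
  have hD : (Dset g).Countable := countable_Dset hg
  have hFC : (sFilter g a b x ⊓ 𝓟 (Dset g)ᶜ).NeBot := by
    rw [sFilter]
    split_ifs with h1 h2
    · have hxltb : x < b := lt_of_le_of_ne hxb (by
        rintro rfl
        rcases h1 with h | h | h
        · exact hbD h
        · exact hbN h
        · exact hab.ne' h)
      rw [← nhdsWithin_inter']
      refine (neBot_sdiff_right hxltb hD).mono (nhdsWithin_mono x ?_)
      rintro z ⟨⟨hz1, hz2⟩, hz3⟩
      exact ⟨⟨hz1, le_trans hax hz1.le, hz2.le⟩, hz3⟩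
    · have haltx : a < x := lt_of_le_of_ne hax (by
        intro he
        rcases h2 with h | h
        · rw [← he] at h; exact ha h
        · rw [← he] at h; exact hab.ne h)
      rw [← nhdsWithin_inter']
      refine (neBot_sdiff_left haltx hD).mono (nhdsWithin_mono x ?_)
      rintro z ⟨⟨hz1, hz2⟩, hz3⟩
      exact ⟨⟨hz2, hz1.le, le_trans hz2.le hxb⟩, hz3⟩
    · push_neg at h1 h2
      have hxltb : x < b := lt_of_le_of_ne hxb h2.2
      rw [← nhdsWithin_inter']
      refine (neBot_sdiff_right hxltb hD).mono (nhdsWithin_mono x ?_)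
      rintro z ⟨⟨hz1, hz2⟩, hz3⟩
      exact ⟨⟨⟨le_trans hax hz1.le, hz2.le⟩, (ne_of_gt hz1 : z ≠ x)⟩, hz3⟩
  have hmemc : ∀ᶠ s in sFilter g a b x ⊓ 𝓟 (Dset g)ᶜ, s ∉ Dset g :=
    eventually_inf_principal.2 (Eventually.of_forall fun s hs => hs)
  have hbranchD : x ∈ Dset g → sFilter g a b x = 𝓝[Set.Ioi x ∩ Set.Icc a b] x :=
    fun hxD => by rw [sFilter, if_pos (Or.inl hxD)]
  have hA : x ∈ Dset g →
      Tendsto (fun s => (g s - g x)⁻¹) (sFilter g a b x) (𝓝 (jump g x)⁻¹) := by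
    intro hxD
    have hj : (0:ℝ) < jump g x := hxD
    have hgt : Tendsto g (sFilter g a b x) (𝓝 (rLim g x)) := by
      rw [hbranchD hxD]
      exact (tendsto_rLim hg x).mono_left (nhdsWithin_mono x Set.inter_subset_left)
    have h2 := (hgt.sub_const (g x)).inv₀ (ne_of_gt hj)
    exact h2
  have hEv : x ∉ D1 g a b ∪ D2 g a b ∪ D3 g a b →
      ¬(x ∈ Dset g ∧ AccPt x (𝓟 (Dset g ∩ Set.Ioc t b))) →
      ∀ᶠ s in sFilter g a b x, s ∉ Dset g := by
    intro h123 hacc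
    have hnD1 : x ∈ Set.Icc a b ∩ Nminus g → ¬ AccPt x (𝓟 (Dset g ∩ Set.Ico a x)) :=
      fun hm hA' => h123 (Or.inl (Or.inl ⟨hm, hA'⟩))
    have hnD2 : x ∈ Set.Icc a b ∩ Nplus g → ¬ AccPt x (𝓟 (Dset g ∩ Set.Ioc x b)) :=
      fun hm hA' => h123 (Or.inl (Or.inr ⟨hm, hA'⟩))
    have hnD3 : x ∈ Set.Icc a b \ (Nset g ∪ Dset g) → ¬ AccPt x (𝓟 (Dset g ∩ Set.Icc a b)) :=
      fun hm hA' => h123 (Or.inr ⟨hm, hA'⟩)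
    rw [sFilter]
    split_ifs with h1 h2
    · by_cases hxD : x ∈ Dset g
      · have hna : ¬ AccPt x (𝓟 (Dset g ∩ Set.Ioc t b)) := fun hA' => hacc ⟨hxD, hA'⟩
        have hev := (not_accPt_eventually hna).filter_mono
          (nhdsWithin_mono x (show Set.Ioi x ∩ Set.Icc a b ⊆ {x}ᶜ from fun z hz => Set.mem_compl_singleton_iff.2 (ne_of_gt hz.1)))
        filter_upwards [self_mem_nhdsWithin, hev] with s hs hnot hsD
        exact hnot ⟨hsD, lt_of_le_of_lt htx hs.1, hs.2.2⟩
      · by_cases hxNp : x ∈ Nplus g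
        · have hna := hnD2 ⟨hxIcc, hxNp⟩
          have hev := (not_accPt_eventually hna).filter_mono
            (nhdsWithin_mono x (show Set.Ioi x ∩ Set.Icc a b ⊆ {x}ᶜ from fun z hz => Set.mem_compl_singleton_iff.2 (ne_of_gt hz.1)))
          filter_upwards [self_mem_nhdsWithin, hev] with s hs hnot hsD
          exact hnot ⟨hsD, hs.1, hs.2.2⟩
        · have hxa : x = a := by
            rcases h1 with h | h | h
            exacts [absurd h hxD, absurd h hxNp, h]
          have hm : x ∈ Set.Icc a b \ (Nset g ∪ Dset g) := by
            refine ⟨hxIcc, ?_⟩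
            rintro (hN | hD')
            · rcases hN with hN | hN
              · rw [hxa] at hN; exact ha hN
              · exact hxNp hN
            · exact hxD hD'
          have hna := hnD3 hm
          have hev := (not_accPt_eventually hna).filter_mono
            (nhdsWithin_mono x (show Set.Ioi x ∩ Set.Icc a b ⊆ {x}ᶜ from fun z hz => Set.mem_compl_singleton_iff.2 (ne_of_gt hz.1)))
          filter_upwards [self_mem_nhdsWithin, hev] with s hs hnot hsD
          exact hnot ⟨hsD, hs.2⟩
    · push_neg at h1
      obtain ⟨hxD, hxNp, _⟩ := h1
      by_cases hxNm : x ∈ Nminus g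
      · have hna := hnD1 ⟨hxIcc, hxNm⟩
        have hev := (not_accPt_eventually hna).filter_mono
          (nhdsWithin_mono x (show Set.Iio x ∩ Set.Icc a b ⊆ {x}ᶜ from fun z hz => Set.mem_compl_singleton_iff.2 (ne_of_lt hz.1)))
        filter_upwards [self_mem_nhdsWithin, hev] with s hs hnot hsD
        exact hnot ⟨hsD, hs.2.1, hs.1⟩
      · have hm : x ∈ Set.Icc a b \ (Nset g ∪ Dset g) := ⟨hxIcc, by
          rintro (hN | hD')
          · rcases hN with hN | hN
            exacts [hxNm hN, hxNp hN]
          · exact hxD hD'⟩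
        have hna := hnD3 hm
        have hev := (not_accPt_eventually hna).filter_mono
          (nhdsWithin_mono x (show Set.Iio x ∩ Set.Icc a b ⊆ {x}ᶜ from fun z hz => Set.mem_compl_singleton_iff.2 (ne_of_lt hz.1)))
        filter_upwards [self_mem_nhdsWithin, hev] with s hs hnot hsD
        exact hnot ⟨hsD, hs.2⟩
    · push_neg at h1 h2
      obtain ⟨hxD, hxNp, _⟩ := h1
      obtain ⟨hxNm, _⟩ := h2
      have hm : x ∈ Set.Icc a b \ (Nset g ∪ Dset g) := ⟨hxIcc, by
        rintro (hN | hD')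
        · rcases hN with hN | hN
          exacts [hxNm hN, hxNp hN]
        · exact hxD hD'⟩
      have hna := hnD3 hm
      have hev := (not_accPt_eventually hna).filter_mono
        (nhdsWithin_mono x (show Set.Icc a b \ {x} ⊆ {x}ᶜ from fun z hz => Set.mem_compl_singleton_iff.2 hz.2))
      filter_upwards [self_mem_nhdsWithin, hev] with s hs hnot hsD
      exact hnot ⟨hsD, hs.1⟩
  have huniq : ∀ L : K, Tendsto (fun s => (g s - g x)⁻¹ • (jump g s • f s - jump g x • f x))
      (sFilter g a b x) (𝓝 L) →
      L = -(Set.indicator (Dset g) (fun _ => (1:ℝ)) x) • f x := by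
    intro L hL
    by_cases hxD : x ∈ Dset g
    · have hj : (0:ℝ) < jump g x := hxD
      have h1 : Tendsto (fun s => (g s - g x)⁻¹ • (-(jump g x • f x)))
          (sFilter g a b x ⊓ 𝓟 (Dset g)ᶜ) (𝓝 ((jump g x)⁻¹ • (-(jump g x • f x)))) :=
        ((hA hxD).mono_left inf_le_left).smul_const _
      have heq : (fun s => (g s - g x)⁻¹ • (-(jump g x • f x)))
          =ᶠ[sFilter g a b x ⊓ 𝓟 (Dset g)ᶜ]
          fun s => (g s - g x)⁻¹ • (jump g s • f s - jump g x • f x) := by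
        filter_upwards [hmemc] with s hs
        rw [jump_eq_zero hg hs, zero_smul, zero_sub]
      have hval : (jump g x)⁻¹ • (-(jump g x • f x)) = -f x := by
        rw [smul_neg, smul_smul, inv_mul_cancel₀ (ne_of_gt hj), one_smul]
      have hQt := h1.congr' heq
      rw [hval] at hQt
      haveI := hFC
      have hLval := tendsto_nhds_unique (hL.mono_left inf_le_left) hQt
      rw [Set.indicator_of_mem hxD, neg_smul, one_smul]
      exact hLval
    · have hj0 : jump g x = 0 := jump_eq_zero hg hxD
      have hQT : Tendsto (fun s => (g s - g x)⁻¹ • (jump g s • f s - jump g x • f x))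
          (sFilter g a b x ⊓ 𝓟 (Dset g)ᶜ) (𝓝 0) := by
        refine Tendsto.congr' ?_ tendsto_const_nhds
        filter_upwards [hmemc] with s hs
        rw [jump_eq_zero hg hs, hj0, zero_smul, zero_smul, sub_zero, smul_zero]
      haveI := hFC
      have hLval := tendsto_nhds_unique (hL.mono_left inf_le_left) hQT
      rw [Set.indicator_of_notMem hxD, neg_zero, zero_smul]
      exact hLval
  refine ⟨?_, ?_, ?_, ?_⟩
  · -- Part 1
    intro h123
    have hxD : x ∉ Dset g := by
      rcases h123 with (h | h) | h
      · exact h.1.2.2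
      · exact h.1.2.2
      · exact fun hd => h.1.2 (Or.inr hd)
    have hj0 : jump g x = 0 := jump_eq_zero hg hxD
    have hfun : (fun s => (g s - g t)⁻¹ • (jump g s • f s))
        = fun s => (g s - g x)⁻¹ • (jump g s • f s - jump g x • f x) := by
      funext s
      rw [hgx, hj0, zero_smul, sub_zero]
    constructor
    · rintro ⟨L, hL⟩
      have hL0 := huniq L hL
      rw [Set.indicator_of_notMem hxD, neg_zero, zero_smul] at hL0
      rw [hL0] at hL
      rw [hfun]
      exact hL.mono_left inf_le_left
    · intro hT
      rw [hfun] at hT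
      refine ⟨0, ?_⟩
      have h1 : Tendsto (fun s => (g s - g x)⁻¹ • (jump g s • f s - jump g x • f x))
          (sFilter g a b x ⊓ 𝓟 (Dset g)ᶜ) (𝓝 0) := by
        refine Tendsto.congr' ?_ tendsto_const_nhds
        filter_upwards [hmemc] with s hs
        rw [jump_eq_zero hg hs, hj0, zero_smul, zero_smul, sub_zero, smul_zero]
      rw [← sup_decomp (sFilter g a b x) (Dset g)]
      exact tendsto_sup.2 ⟨hT, h1⟩
  · -- Part 2
    intro hxD hAcc
    have hj : (0:ℝ) < jump g x := hxD
    have hgb : ∀ s, x < s → jump g x ≤ g s - g x := fun s hs => by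
      have := rLim_le hg hs
      simp only [jump] at *
      linarith
    have hzero : Tendsto (fun s => jump g s • f s)
        (sFilter g a b x ⊓ 𝓟 (Dset g)ᶜ) (𝓝 0) := by
      refine Tendsto.congr' ?_ tendsto_const_nhds
      filter_upwards [hmemc] with s hs
      rw [jump_eq_zero hg hs, zero_smul]
    have hgt2 : Tendsto (fun s => g s - g x) (sFilter g a b x) (𝓝 (jump g x)) := by
      rw [hbranchD hxD]
      exact ((tendsto_rLim hg x).mono_left
        (nhdsWithin_mono x Set.inter_subset_left)).sub_const (g x)
    constructor
    · rintro ⟨L, hL⟩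
      have hAh : Tendsto (fun s => (g s - g x)⁻¹ • (jump g s • f s)) (sFilter g a b x)
          (𝓝 (L + f x)) := by
        have h3 := hL.add ((hA hxD).smul_const (jump g x • f x))
        have heq : (fun s => (g s - g x)⁻¹ • (jump g s • f s - jump g x • f x)
              + (g s - g x)⁻¹ • (jump g x • f x))
            = fun s => (g s - g x)⁻¹ • (jump g s • f s) := by
          funext s
          rw [smul_sub]
          abel
        rw [heq] at h3
        convert h3 using 2
        rw [smul_smul, inv_mul_cancel₀ (ne_of_gt hj), one_smul]
      have hh : Tendsto (fun s => jump g s • f s) (sFilter g a b x)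
          (𝓝 (jump g x • (L + f x))) := by
        refine (hgt2.smul hAh).congr' ?_
        rw [hbranchD hxD]
        filter_upwards [self_mem_nhdsWithin] with s hs
        rw [smul_smul, mul_inv_cancel₀ (ne_of_gt (lt_of_lt_of_le hj (hgb s hs.1))), one_smul]
      haveI := hFC
      have hM : jump g x • (L + f x) = (0:K) :=
        tendsto_nhds_unique (hh.mono_left inf_le_left) hzero
      rw [hM] at hh
      exact hh.mono_left inf_le_left
    · intro hT
      have hhF : Tendsto (fun s => jump g s • f s) (sFilter g a b x) (𝓝 0) := by
        rw [← sup_decomp (sFilter g a b x) (Dset g)]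
        exact tendsto_sup.2 ⟨hT, hzero⟩
      refine ⟨-f x, ?_⟩
      have h1 := ((hA hxD).smul hhF).sub ((hA hxD).smul_const (jump g x • f x))
      have heq : (fun s => (g s - g x)⁻¹ • (jump g s • f s)
            - (g s - g x)⁻¹ • (jump g x • f x))
          = fun s => (g s - g x)⁻¹ • (jump g s • f s - jump g x • f x) := by
        funext s
        rw [smul_sub]
      rw [heq] at h1
      convert h1 using 2
      rw [smul_zero, zero_sub, smul_smul, inv_mul_cancel₀ (ne_of_gt hj), one_smul]
  · -- Part 3
    intro h123 hacc
    have hev := hEv h123 hacc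
    by_cases hxD : x ∈ Dset g
    · have hj : (0:ℝ) < jump g x := hxD
      refine ⟨-f x, ?_⟩
      have h1 := (hA hxD).smul_const (-(jump g x • f x))
      have heq : (fun s => (g s - g x)⁻¹ • (-(jump g x • f x))) =ᶠ[sFilter g a b x]
          fun s => (g s - g x)⁻¹ • (jump g s • f s - jump g x • f x) := by
        filter_upwards [hev] with s hs
        rw [jump_eq_zero hg hs, zero_smul, zero_sub]
      have h2 := h1.congr' heq
      convert h2 using 2
      rw [smul_neg, smul_smul, inv_mul_cancel₀ (ne_of_gt hj), one_smul]
    · refine ⟨0, ?_⟩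
      refine Tendsto.congr' ?_ tendsto_const_nhds
      filter_upwards [hev] with s hs
      rw [jump_eq_zero hg hs, jump_eq_zero hg hxD, zero_smul, zero_smul, sub_zero, smul_zero]
  · -- Part 4
    intro L hL
    exact huniq L hL
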